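/- Let 0 < q1 < q2 ≤ 1, ρ1 = sin(q1π/2)/sin((q2−q1)π/2), ρ2 = sin(q2π/2)/sin((q2−q1)π/2), ρ = ρ1/ρ2. Then for every u ∈ (0, ρ], one has (ρ1 − u·ρ2)^{q1} ≤ (ρ2 − u·ρ1)^{q2}. -/

import Mathlib

set_option maxHeartbeats 1000000

open Real

-- helper: sin monotone comparison
lemma sin_mono_aux {w x : ℝ} (hw0 : 0 ≤ w) (hwx : w ≤ x) (hx : x ≤ π - w) :
    sin w ≤ sin x := by
  have hw2 : w ≤ π / 2 := by nlinarith
  rcases le_or_gt x (π / 2) with h | h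
  · exact sin_le_sin_of_le_of_le_pi_div_two (by linarith [pi_div_two_pos.le]) h hwx
  · rw [← Real.sin_pi_sub x]
    exact sin_le_sin_of_le_of_le_pi_div_two (by linarith [pi_div_two_pos.le])
      (by linarith) (by linarith)

theorem stmt6 (q1 q2 : ℝ) (h1 : 0 < q1) (h2 : q1 < q2) (h3 : q2 ≤ 1)
    (ρ1 ρ2 ρ : ℝ)
    (hρ1 : ρ1 = sin (q1 * π / 2) / sin ((q2 - q1) * π / 2))
    (hρ2 : ρ2 = sin (q2 * π / 2) / sin ((q2 - q1) * π / 2))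
    (hρ : ρ = ρ1 / ρ2) :
    ∀ u : ℝ, 0 < u → u ≤ ρ → (ρ1 - u * ρ2) ^ q1 ≤ (ρ2 - u * ρ1) ^ q2 := by
  intro u hu0 huρ
  have hπ := pi_pos
  set α : ℝ := q1 * π / 2 with hαdef
  set β : ℝ := q2 * π / 2 with hβdef
  have hα0 : 0 < α := by positivity
  have hαβ : α < β := by
    have : 0 < π / 2 := pi_div_two_pos
    rw [hαdef, hβdef]; nlinarith
  have hβ2 : β ≤ π / 2 := by rw [hβdef]; nlinarith
  have hα2 : α < π / 2 := lt_of_lt_of_le hαβ hβ2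
  have hδarg : (q2 - q1) * π / 2 = β - α := by rw [hαdef, hβdef]; ring
  have hsδ : 0 < sin (β - α) := sin_pos_of_pos_of_lt_pi (by linarith) (by linarith)
  have hsα : 0 < sin α := sin_pos_of_pos_of_lt_pi hα0 (by linarith)
  have hsβ : 0 < sin β := sin_pos_of_pos_of_lt_pi (by linarith) (by linarith)
  have hsαβ : sin α < sin β :=
    strictMonoOn_sin ⟨by linarith, hα2.le⟩ ⟨by linarith, hβ2⟩ hαβ
  rw [hδarg] at hρ1 hρ2
  -- ρ = sin α / sin β
  have hρval : ρ = sin α / sin β := by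
    rw [hρ, hρ1, hρ2]; field_simp
  have hub : u * sin β ≤ sin α := by
    rw [hρval] at huρ
    calc u * sin β ≤ (sin α / sin β) * sin β := by
          exact mul_le_mul_of_nonneg_right huρ hsβ.le
      _ = sin α := by field_simp
  have hu1 : u < 1 := by
    by_contra h
    push_neg at h
    have : sin β ≤ u * sin β := le_mul_of_one_le_left hsβ.le h
    linarith
  have hcβ : 0 ≤ cos β := cos_nonneg_of_mem_Icc ⟨by linarith, hβ2⟩
  have hcα : 0 < cos α := cos_pos_of_mem_Ioo ⟨by linarith, hα2⟩
  have hcαβ : cos β < cos α := by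
    have := Real.cos_lt_cos_of_nonneg_of_le_pi hα0.le (by linarith) hαβ
    linarith
  set N : ℝ := sin α - u * sin β with hN
  set D : ℝ := cos α - u * cos β with hD
  have hN0 : 0 ≤ N := by rw [hN]; linarith
  have hD0 : 0 < D := by
    rw [hD]
    have : u * cos β ≤ 1 * cos β := mul_le_mul_of_nonneg_right hu1.le hcβ
    linarith
  set φ : ℝ := arctan (N / D) with hφ
  have hφ0 : 0 ≤ φ := by
    rw [hφ, ← Real.arctan_zero]
    exact arctan_strictMono.monotone (div_nonneg hN0 hD0.le)
  have hcφ : 0 < cos φ := cos_arctan_pos _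
  -- tan φ = N / D, so sin φ * D = cos φ * N
  have hE : sin φ * D = cos φ * N := by
    have ht : tan φ = N / D := tan_arctan _
    rw [tan_eq_sin_div_cos] at ht
    field_simp at ht
    linarith
  -- φ < α
  have hφα : φ < α := by
    have htα : tan α = sin α / cos α := tan_eq_sin_div_cos α
    have hlt : N / D < sin α / cos α := by
      rw [div_lt_div_iff₀ hD0 hcα, hN, hD]
      have hpos : 0 < sin β * cos α - cos β * sin α := by
        have h := Real.sin_sub β α
        linarith [hsδ, h.symm.le, h.le]
      have := mul_pos hu0 hpos
      nlinarith [this]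
    have hlt' : N / D < tan α := by rw [htα]; exact hlt
    have h := arctan_strictMono hlt'
    rwa [arctan_tan (by linarith) hα2] at h
  have hφβ : φ < β := hφα.trans hαβ
  have hsβφ : 0 < sin (β - φ) := sin_pos_of_pos_of_lt_pi (by linarith) (by linarith)
  have hsφ : 0 ≤ sin φ := sin_nonneg_of_nonneg_of_le_pi hφ0 (by linarith)
  have hsγ : 0 < sin (α + β - φ) := sin_pos_of_pos_of_lt_pi (by linarith) (by linarith)
  -- key: sin (α - φ) = u * sin (β - φ)
  have hkey : sin (α - φ) = u * sin (β - φ) := by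
    rw [sin_sub, sin_sub]
    rw [hN, hD] at hE
    linear_combination -hE
  -- identity A
  have hA : N * sin (β - φ) = sin φ * sin (β - α) := by
    have : sin α * sin (β - φ) - sin β * (u * sin (β - φ)) = sin φ * sin (β - α) := by
      rw [← hkey, sin_sub, sin_sub, sin_sub]; ring
    rw [hN]; linarith [this]
  -- identity B via cos_sub_cos
  have hprod1 : cos φ - cos (2*β - φ) = 2 * sin β * sin (β - φ) := by
    have h := Real.cos_sub_cos φ (2*β - φ)
    rw [show (φ + (2*β - φ))/2 = β by ring, show (φ - (2*β - φ))/2 = -(β - φ) by ring,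
      Real.sin_neg] at h
    linarith
  have hprod2 : cos φ - cos (2*α - φ) = 2 * sin α * sin (α - φ) := by
    have h := Real.cos_sub_cos φ (2*α - φ)
    rw [show (φ + (2*α - φ))/2 = α by ring, show (φ - (2*α - φ))/2 = -(α - φ) by ring,
      Real.sin_neg] at h
    linarith
  have hprod3 : cos (2*α - φ) - cos (2*β - φ) = 2 * sin (α + β - φ) * sin (β - α) := by
    have h := Real.cos_sub_cos (2*α - φ) (2*β - φ)
    rw [show ((2*α - φ) + (2*β - φ))/2 = α + β - φ by ring,
      show ((2*α - φ) - (2*β - φ))/2 = -(β - α) by ring, Real.sin_neg] at h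
    linarith
  have hB : (sin β - u * sin α) * sin (β - φ) = sin (α + β - φ) * sin (β - α) := by
    have h1 : sin β * sin (β - φ) - sin α * sin (α - φ) = sin (α + β - φ) * sin (β - α) := by
      linarith
    rw [hkey] at h1
    linarith [h1]
  -- rewrite bases
  have hbase1 : ρ1 - u * ρ2 = sin φ / sin (β - φ) := by
    have h := hA
    rw [hN] at h
    rw [hρ1, hρ2]
    field_simp
    linear_combination h
  have hbase2 : ρ2 - u * ρ1 = sin (α + β - φ) / sin (β - φ) := by
    rw [hρ1, hρ2]
    field_simp
    linear_combination hB
  rw [hbase1, hbase2]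
  -- main inequality: sin φ ^ q1 * sin (β-φ) ^ (q2-q1) ≤ sin (α+β-φ) ^ q2
  set w1 : ℝ := q1 / q2 with hw1
  set w2 : ℝ := (q2 - q1) / q2 with hw2
  have hq2 : (0:ℝ) < q2 := h1.trans h2
  have hw1p : 0 < w1 := by rw [hw1]; exact div_pos h1 hq2
  have hw2p : 0 < w2 := by rw [hw2]; exact div_pos (by linarith) hq2
  have hw12 : w1 + w2 = 1 := by rw [hw1, hw2]; field_simp; ring
  set w : ℝ := w1 * φ + w2 * (β - φ) with hw
  have hw0 : 0 ≤ w := by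
    rw [hw]
    have := mul_nonneg hw1p.le hφ0
    have := mul_nonneg hw2p.le (by linarith : (0:ℝ) ≤ β - φ)
    linarith
  have step1 : sin φ ^ w1 * sin (β - φ) ^ w2 ≤ w1 * sin φ + w2 * sin (β - φ) :=
    Real.geom_mean_le_arith_mean2_weighted hw1p.le hw2p.le hsφ hsβφ.le hw12
  have step2 : w1 * sin φ + w2 * sin (β - φ) ≤ sin w := by
    have hmem1 : φ ∈ Set.Icc 0 π := Set.mem_Icc.mpr ⟨hφ0, by linarith⟩
    have hmem2 : β - φ ∈ Set.Icc 0 π := Set.mem_Icc.mpr ⟨by linarith, by linarith⟩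
    have h := strictConcaveOn_sin_Icc.concaveOn.2 hmem1 hmem2 hw1p.le hw2p.le hw12
    rw [hw]
    simpa [smul_eq_mul] using h
  have hq2w : q2 * w = q1 * φ + (q2 - q1) * (β - φ) := by
    rw [hw, hw1, hw2]
    field_simp
  have step3 : sin w ≤ sin (α + β - φ) := by
    apply sin_mono_aux hw0
    · -- w ≤ α + β - φ
      have h5 : q2 * (α + β - φ) - q2 * w = 2 * q1 * (β - φ) := by
        rw [hq2w, hαdef, hβdef]; ring
      have h6 : q2 * w ≤ q2 * (α + β - φ) := by
        have := mul_nonneg (by linarith : (0:ℝ) ≤ 2 * q1) (by linarith : (0:ℝ) ≤ β - φ)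
        linarith
      exact (mul_le_mul_iff_right₀ hq2).mp h6
    · -- α + β - φ ≤ π - w
      have h7 : q2 * π - q2 * w - q2 * (α + β - φ) = q2 * π * (1 - q2) + 2 * (q2 - q1) * φ := by
        rw [hq2w, hαdef, hβdef]; ring
      have h8 : q2 * (α + β - φ) ≤ q2 * (π - w) := by
        have ha := mul_nonneg (mul_nonneg hq2.le hπ.le) (by linarith : (0:ℝ) ≤ 1 - q2)
        have hb := mul_nonneg (by linarith : (0:ℝ) ≤ 2 * (q2 - q1)) hφ0
        have hc : q2 * (π - w) = q2 * π - q2 * w := by ring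
        linarith
      exact (mul_le_mul_iff_right₀ hq2).mp h8
  have hG0 : 0 ≤ sin φ ^ w1 * sin (β - φ) ^ w2 := by positivity
  have main : sin φ ^ q1 * sin (β - φ) ^ (q2 - q1) ≤ sin (α + β - φ) ^ q2 := by
    have h := Real.rpow_le_rpow hG0 (step1.trans (step2.trans step3)) hq2.le
    rw [Real.mul_rpow (Real.rpow_nonneg hsφ _) (Real.rpow_nonneg hsβφ.le _),
      ← Real.rpow_mul hsφ, ← Real.rpow_mul hsβφ.le,
      show w1 * q2 = q1 by rw [hw1]; field_simp,
      show w2 * q2 = q2 - q1 by rw [hw2]; field_simp] at h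
    exact h
  -- conclude
  rw [Real.div_rpow hsφ hsβφ.le, Real.div_rpow hsγ.le hsβφ.le]
  rw [div_le_div_iff₀ (Real.rpow_pos_of_pos hsβφ q1) (Real.rpow_pos_of_pos hsβφ q2)]
  have hsplit : sin (β - φ) ^ q2 = sin (β - φ) ^ (q2 - q1) * sin (β - φ) ^ q1 := by
    rw [← Real.rpow_add hsβφ]; ring_nf
  rw [hsplit]
  calc sin φ ^ q1 * (sin (β - φ) ^ (q2 - q1) * sin (β - φ) ^ q1)
      = (sin φ ^ q1 * sin (β - φ) ^ (q2 - q1)) * sin (β - φ) ^ q1 := by ring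
    _ ≤ sin (α + β - φ) ^ q2 * sin (β - φ) ^ q1 :=
        mul_le_mul_of_nonneg_right main (Real.rpow_nonneg hsβφ.le q1)
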